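/- Vectors x_1,…,x_m in a Clifford algebra over a commutative ring R are linearly independent (no nontrivial R-linear combination vanishes) if and only if the single element x_1 ∧ x_2 ∧ ⋯ ∧ x_m is linearly independent (i.e. r·(x_1 ∧ ⋯ ∧ x_m) = 0 for r ∈ R implies r = 0). -/

import Mathlib

open Finset Matrix

lemma mccoy_exists_dependency {R : Type*} [CommRing R] {m : ℕ} {ι : Type*} [Fintype ι]
    [DecidableEq ι] (A : Matrix (Fin m) ι R) (r : R) (hr : r ≠ 0)
    (h : ∀ c : Fin m → ι, r * (A.submatrix id c).det = 0) :
    ∃ g : Fin m → R, (∀ j, ∑ i, g i * A i j = 0) ∧ ∃ i, g i ≠ 0 := by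
  classical
  set S : Set ℕ := {k | ∃ (ρ : Fin k → Fin m) (γ : Fin k → ι),
      r * (A.submatrix ρ γ).det ≠ 0} with hS
  have hinj : ∀ k (ρ : Fin k → Fin m) (γ : Fin k → ι),
      r * (A.submatrix ρ γ).det ≠ 0 → Function.Injective ρ := by
    intro k ρ γ hne a b hab
    by_contra hne'
    exact hne (by rw [Matrix.det_zero_of_row_eq hne' (by ext j; simp [Matrix.submatrix_apply, hab]),
      mul_zero])
  have hbdd : ∀ k ∈ S, k < m := by
    rintro k ⟨ρ, γ, hne⟩
    have hρ := hinj k ρ γ hne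
    have hle : k ≤ m := by simpa using Fintype.card_le_of_injective ρ hρ
    rcases lt_or_eq_of_le hle with h' | h'
    · exact h'
    · exfalso
      subst h'
      have hbij : Function.Bijective ρ := ⟨hρ, Finite.surjective_of_injective hρ⟩
      set e := Equiv.ofBijective ρ hbij with he
      apply hne
      have h1 : A.submatrix ρ γ = (A.submatrix id γ).submatrix (e : Equiv.Perm (Fin k)) id := by
        ext i j; simp [he]
      rw [h1, Matrix.det_permute (e : Equiv.Perm (Fin k)) (A.submatrix id γ),
        mul_left_comm, h γ, mul_zero]
  have h0 : (0 : ℕ) ∈ S := by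
    refine ⟨Fin.elim0, Fin.elim0, ?_⟩
    rw [Matrix.det_fin_zero, mul_one]; exact hr
  have hSne : S.Nonempty := ⟨0, h0⟩
  have hSbdd : BddAbove S := ⟨m, fun k hk => (hbdd k hk).le⟩
  set t := sSup S with ht
  have htS : t ∈ S := Nat.sSup_mem hSne hSbdd
  have htm : t < m := hbdd t htS
  have htmax : ∀ (ρ : Fin (t + 1) → Fin m) (γ : Fin (t + 1) → ι),
      r * (A.submatrix ρ γ).det = 0 := by
    intro ρ γ
    by_contra hne
    exact absurd (le_csSup hSbdd ⟨ρ, γ, hne⟩) (by omega)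
  obtain ⟨ρ, γ, hμ⟩ := htS
  have hρ := hinj t ρ γ hμ
  -- pick a row not hit by ρ
  have hexp : ∃ p : Fin m, p ∉ Set.range ρ := by
    by_contra hc
    push_neg at hc
    have : Function.Surjective ρ := fun p => hc p
    have := Fintype.card_le_of_surjective ρ this
    simp at this; omega
  obtain ⟨p, hp⟩ := hexp
  set ρ' : Fin (t + 1) → Fin m := Fin.snoc ρ p with hρ'
  have hρ'inj : Function.Injective ρ' := by
    intro a b hab
    rcases Fin.eq_castSucc_or_eq_last a with ⟨a', rfl⟩ | rfl <;>
      rcases Fin.eq_castSucc_or_eq_last b with ⟨b', rfl⟩ | rfl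
    · simp only [hρ', Fin.snoc_castSucc] at hab
      exact congrArg Fin.castSucc (hρ hab)
    · simp only [hρ', Fin.snoc_castSucc, Fin.snoc_last] at hab
      exact absurd ⟨a', hab⟩ hp
    · simp only [hρ', Fin.snoc_castSucc, Fin.snoc_last] at hab
      exact absurd ⟨b', hab.symm⟩ hp
    · rfl
  set c : Fin (t + 1) → R :=
    fun i => (-1) ^ (i + t : ℕ) * r * (A.submatrix (ρ' ∘ i.succAbove) γ).det with hc
  have hclast : c (Fin.last t) = r * (A.submatrix ρ γ).det := by
    have h1 : ρ' ∘ (Fin.last t).succAbove = ρ := by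
      funext a; simp [hρ', Fin.succAbove_last]
    rw [hc]
    simp only [h1, Fin.val_last]
    rw [← two_mul, pow_mul]
    norm_num
  have hrel : ∀ j : ι, ∑ i, c i * A (ρ' i) j = 0 := by
    intro j
    have hN := htmax ρ' (Fin.snoc γ j)
    rw [Matrix.det_succ_column (A.submatrix ρ' (Fin.snoc γ j)) (Fin.last t)] at hN
    rw [Finset.mul_sum] at hN
    rw [← hN]
    refine Finset.sum_congr rfl fun i _ => ?_
    have h1 : (A.submatrix ρ' (Fin.snoc γ j)).submatrix i.succAbove (Fin.last t).succAbove
        = A.submatrix (ρ' ∘ i.succAbove) γ := by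
      ext a b
      simp [Fin.succAbove_last]
    have h2 : (A.submatrix ρ' (Fin.snoc γ j)) i (Fin.last t) = A (ρ' i) j := by
      simp
    rw [h1, h2, hc]
    simp only [Fin.val_last]
    ring
  refine ⟨fun q => ∑ i, if ρ' i = q then c i else 0, fun j => ?_, ⟨ρ' (Fin.last t), ?_⟩⟩
  · calc ∑ q, (∑ i, if ρ' i = q then c i else 0) * A q j
        = ∑ q, ∑ i, (if ρ' i = q then c i * A q j else 0) := by
          refine Finset.sum_congr rfl fun q _ => ?_
          rw [Finset.sum_mul]
          exact Finset.sum_congr rfl fun i _ => by split <;> simp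
      _ = ∑ i, ∑ q, (if ρ' i = q then c i * A q j else 0) := Finset.sum_comm
      _ = ∑ i, c i * A (ρ' i) j := by
          refine Finset.sum_congr rfl fun i _ => ?_
          rw [Finset.sum_ite_eq]
          simp
      _ = 0 := hrel j
  · have h1 : (∑ i, if ρ' i = ρ' (Fin.last t) then c i else 0) = c (Fin.last t) := by
      rw [show (fun i => if ρ' i = ρ' (Fin.last t) then c i else 0)
          = fun i => if i = Fin.last t then c i else 0 from
        funext fun i => by simp only [hρ'inj.eq_iff]]
      rw [Finset.sum_ite_eq']
      simp
    simpa [h1, hclast] using hμ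

/-- Vectors `x_1,…,x_m` in a Clifford algebra over a commutative ring `R` (whose exterior
structure is the exterior algebra of a finite free `R`-module) are linearly independent
(no nontrivial `R`-linear combination vanishes) if and only if the `m`-vector
`x_1 ∧ x_2 ∧ ⋯ ∧ x_m` is linearly independent, i.e. `r • (x_1 ∧ ⋯ ∧ x_m) = 0` implies
`r = 0`. -/
theorem linearIndependent_iff_wedge
    {R M : Type*} [CommRing R] [AddCommGroup M] [Module R M]
    [Module.Free R M] [Module.Finite R M]
    {m : ℕ} (x : Fin m → M) :
    LinearIndependent R x ↔
      ∀ r : R, r • (List.ofFn fun i => ExteriorAlgebra.ι R (x i)).prod = 0 → r = 0 := by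
  classical
  rw [← ExteriorAlgebra.ιMulti_apply]
  constructor
  · -- hard direction: McCoy
    intro hli r hrw
    by_contra hr
    set b := Module.Free.chooseBasis R M with hb
    set ι := Module.Free.ChooseBasisIndex R M
    set A : Matrix (Fin m) ι R := Matrix.of fun i j => b.repr (x i) j with hA
    have hminor : ∀ cc : Fin m → ι, r * (A.submatrix id cc).det = 0 := by
      intro cc
      -- build the alternating determinant functional
      set F : M [⋀^Fin m]→ₗ[R] R :=
        (Matrix.detRowAlternating (n := Fin m) (R := R)).compLinearMap
          (LinearMap.pi fun i => b.coord (cc i)) with hF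
      set f : ∀ i, M [⋀^Fin i]→ₗ[R] R :=
        Function.update (fun i => (0 : M [⋀^Fin i]→ₗ[R] R)) m F with hf
      have h1 : ExteriorAlgebra.liftAlternating f (r • ExteriorAlgebra.ιMulti R m x) = 0 := by
        rw [hrw, map_zero]
      rw [LinearMap.map_smul, ExteriorAlgebra.liftAlternating_apply_ιMulti] at h1
      have h2 : f m x = F x := by rw [hf, Function.update_self]
      rw [h2] at h1
      have h3 : F x = (A.submatrix id cc).det := by
        rw [hF]
        simp only [AlternatingMap.compLinearMap_apply]
        have he : (fun i => (LinearMap.pi fun k => b.coord (cc k)) (x i))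
            = fun i j => (A.submatrix id cc) i j := by
          funext i j
          simp [hA, Module.Basis.coord_apply]
        rw [he]
        rfl
      rw [h3, smul_eq_mul] at h1
      exact h1
    obtain ⟨g, hg, i0, hi0⟩ := mccoy_exists_dependency A r hr hminor
    have : ∑ i, g i • x i = 0 := by
      apply b.repr.injective
      rw [map_sum, map_zero]
      ext j
      simpa [hA] using hg j
    exact hi0 (Fintype.linearIndependent_iff.mp hli g this i0)
  · -- easy direction
    intro h
    rw [Fintype.linearIndependent_iff]
    intro g hg j
    apply h
    set F := ExteriorAlgebra.ιMulti R m (M := M) with hF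
    set L : M →ₗ[R] ExteriorAlgebra R M := F.toMultilinearMap.toLinearMap x j with hL
    have hLapp : ∀ v, F (Function.update x j v) = L v := fun v => rfl
    have h1 : g j • F x = L (g j • x j) := by
      rw [← hLapp, F.map_update_smul, Function.update_eq_self]
    have h2 : g j • x j = -∑ i ∈ Finset.univ.erase j, g i • x i := by
      rw [← Finset.sum_erase_add _ _ (Finset.mem_univ j)] at hg
      exact eq_neg_of_add_eq_zero_right hg
    rw [h2, map_neg, map_sum] at h1
    have h3 : ∀ i ∈ Finset.univ.erase j, L (g i • x i) = 0 := by
      intro i hi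
      have hij : i ≠ j := Finset.ne_of_mem_erase hi
      rw [L.map_smul, ← hLapp, F.map_eq_zero_of_eq (Function.update x j (x i)) (i := i) (j := j)
        (by rw [Function.update_of_ne hij, Function.update_self]) hij, smul_zero]
    rw [Finset.sum_eq_zero h3, neg_zero] at h1
    exact h1
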